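/- Let h, w, k : ℤ⁺ → ℤ⁺ with k ≻ 1. If h ≺ k, then L^k[h, w] ≍ h·w·ln(k/h); that is, there exist constants 0 < a ≤ b with a·h(n)·w(n)·ln(k(n)/h(n)) ≤ L^{k(n)}[h(n), w(n)] ≤ b·h(n)·w(n)·ln(k(n)/h(n)) for all large n. -/

import Mathlib

open Filter

/-- A Kostant picture of height `η`. -/
def IsKostant {w : ℕ} (η : Fin w → ℕ) (c : Fin w → Fin w → ℕ) : Prop :=
  (∀ i j : Fin w, j < i → c i j = 0) ∧
  ∀ m : Fin w, (∑ i : Fin w, ∑ j : Fin w, (if i ≤ m ∧ m ≤ j then c i j else 0)) = η m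

/-- Kostant's partition function. -/
noncomputable def KPF {w : ℕ} (η : Fin w → ℕ) : ℕ :=
  Set.ncard {c : Fin w → Fin w → ℕ | IsKostant η c}

/-- `L[h,w] = ln KPF[(h,…,h)]` for the constant tuple of length `w`. -/
noncomputable def Lbox (h w : ℕ) : ℝ := Real.log (KPF (fun _ : Fin w => h))

/-- `T^k[η]`: the maximal number of `k`-colorings of a Kostant picture of height `η`,
where a picture `c` has `∏_{i ≤ j} C(c i j + k - 1, k - 1)` colorings. -/
noncomputable def Tcol {w : ℕ} (k : ℕ) (η : Fin w → ℕ) : ℕ :=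
  sSup ((fun c : Fin w → Fin w → ℕ =>
      ∏ i : Fin w, ∏ j : Fin w,
        (if i ≤ j then Nat.choose (c i j + k - 1) (k - 1) else 1)) ''
    {c : Fin w → Fin w → ℕ | IsKostant η c})

/-- `L^k[h,w] = ln T^k[(h,…,h)]` for the constant tuple of length `w`. -/
noncomputable def Lcol (k h w : ℕ) : ℝ := Real.log (Tcol k (fun _ : Fin w => h))

private lemma sum_half_pow (n : ℕ) :
    ∑ d ∈ Finset.range n, ((1:ℝ)/2)^(d+1) = 1 - (1/2)^n := by
  induction n with
  | zero => simp
  | succ n ih => rw [Finset.sum_range_succ, ih]; ring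

private lemma pow_le_exp_mul_factorial : ∀ c : ℕ, (c:ℝ)^c ≤ Real.exp c * c.factorial := by
  intro c
  induction c with
  | zero => simp
  | succ c ih =>
    rcases Nat.eq_zero_or_pos c with h | h
    · subst h
      simpa using Real.one_le_exp (by norm_num : (0:ℝ) ≤ 1)
    · have hc : (0:ℝ) < c := by exact_mod_cast h
      have h2 : (1 + 1/(c:ℝ)) ≤ Real.exp (1/c) := by
        have := Real.add_one_le_exp (1/(c:ℝ)); linarith
      have h3 : (1 + 1/(c:ℝ))^c ≤ (Real.exp (1/c))^c :=
        pow_le_pow_left₀ (by positivity) h2 c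
      have h4 : (Real.exp (1/(c:ℝ)))^c = Real.exp 1 := by
        rw [← Real.exp_nat_mul]
        congr 1
        field_simp
      have h5 : ((c:ℝ)+1)^c ≤ Real.exp 1 * (c:ℝ)^c := by
        have he : ((c:ℝ)+1) = c * (1 + 1/c) := by field_simp
        rw [he, mul_pow]
        rw [h4] at h3
        nlinarith [pow_nonneg hc.le c]
      have hfact : ((c+1:ℕ) : ℝ)^(c+1) = ((c:ℝ)+1)^c * ((c:ℝ)+1) := by
        push_cast; ring
      rw [hfact]
      have : ((c:ℝ)+1)^c * ((c:ℝ)+1) ≤ (Real.exp 1 * (Real.exp c * c.factorial)) * ((c:ℝ)+1) := by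
        apply mul_le_mul_of_nonneg_right _ (by positivity)
        calc ((c:ℝ)+1)^c ≤ Real.exp 1 * (c:ℝ)^c := h5
          _ ≤ Real.exp 1 * (Real.exp c * c.factorial) :=
              mul_le_mul_of_nonneg_left ih (Real.exp_pos 1).le
      refine this.trans (le_of_eq ?_)
      have hexp : Real.exp 1 * Real.exp (c:ℝ) = Real.exp ((c:ℝ)+1) := by
        rw [← Real.exp_add]; ring_nf
      push_cast [Nat.factorial_succ]
      rw [← hexp]
      ring

private lemma log_choose_le (H K cv L : ℕ) (hH : 0 < H) (hHK : H ≤ K)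
    (hcH : cv ≤ H) (hL : 1 ≤ L) :
    Real.log ((cv + K - 1).choose (K-1)) ≤
      (cv:ℝ) * (1 + Real.log 2 + Real.log ((K:ℝ)/H)) + (cv:ℝ) * L
        + (H:ℝ) * Real.exp (-(L:ℝ)) := by
  have hK : 0 < K := lt_of_lt_of_le hH hHK
  have hHpos : (0:ℝ) < H := by exact_mod_cast hH
  have hKpos : (0:ℝ) < K := by exact_mod_cast hK
  have hlogKH : 0 ≤ Real.log ((K:ℝ)/H) := by
    apply Real.log_nonneg
    rw [le_div_iff₀ hHpos]
    rw [one_mul]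
    exact_mod_cast hHK
  rcases Nat.eq_zero_or_pos cv with h0 | hcv
  · subst h0
    have he : 0 + K - 1 = K - 1 := by omega
    rw [he, Nat.choose_self, Nat.cast_one, Real.log_one]
    positivity
  · have hcpos : (0:ℝ) < cv := by exact_mod_cast hcv
    have hsymm : (cv + K - 1).choose (K - 1) = (cv + K - 1).choose cv := by
      have h2 : (cv + K - 1) - cv = K - 1 := by omega
      rw [← h2, Nat.choose_symm (by omega)]
    set n := cv + K - 1 with hn
    have hnK : K ≤ n := by omega
    have hnpos : (0:ℝ) < n := by
      have : 0 < n := by omega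
      exact_mod_cast this
    have hchoosepos : 0 < n.choose cv := Nat.choose_pos (by omega)
    have hchoosele : (n.choose cv : ℝ) * cv.factorial ≤ (n:ℝ)^cv := by
      have : n.choose cv * cv.factorial ≤ n ^ cv := by
        calc n.choose cv * cv.factorial = cv.factorial * n.choose cv := Nat.mul_comm _ _
          _ = n.descFactorial cv := (Nat.descFactorial_eq_factorial_mul_choose n cv).symm
          _ ≤ n ^ cv := Nat.descFactorial_le_pow n cv
      exact_mod_cast this
    have hfactpos : (0:ℝ) < cv.factorial := by exact_mod_cast cv.factorial_pos
    have hchposR : (0:ℝ) < n.choose cv := by exact_mod_cast hchoosepos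
    have l1 : Real.log (n.choose cv) ≤ (cv:ℝ) * Real.log n - Real.log cv.factorial := by
      have hlog := Real.log_le_log (by positivity) hchoosele
      rw [Real.log_mul (ne_of_gt hchposR) (ne_of_gt hfactpos), Real.log_pow] at hlog
      linarith
    have l2 : (cv:ℝ) * Real.log cv - cv ≤ Real.log cv.factorial := by
      have hlog := Real.log_le_log (by positivity) (pow_le_exp_mul_factorial cv)
      rw [Real.log_pow, Real.log_mul (Real.exp_ne_zero _) (ne_of_gt hfactpos),
        Real.log_exp] at hlog
      linarith
    have l3 : Real.log (n:ℝ) ≤ Real.log 2 + Real.log K := by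
      have hle : (n:ℝ) ≤ 2 * K := by
        have : n ≤ 2 * K := by omega
        exact_mod_cast this
      calc Real.log (n:ℝ) ≤ Real.log (2*K) := Real.log_le_log hnpos hle
        _ = Real.log 2 + Real.log K := Real.log_mul two_ne_zero (ne_of_gt hKpos)
    have l4 : (cv:ℝ) * (Real.log H - Real.log cv) ≤ (cv:ℝ) * L + (H:ℝ) * Real.exp (-(L:ℝ)) := by
      have hx : (0:ℝ) < (H:ℝ) * Real.exp (-(L:ℝ)) / cv := by positivity
      have ht := Real.log_le_sub_one_of_pos hx
      rw [Real.log_div (by positivity) (ne_of_gt hcpos),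
        Real.log_mul (ne_of_gt hHpos) (Real.exp_ne_zero _), Real.log_exp] at ht
      have key : (cv:ℝ) * ((H:ℝ) * Real.exp (-(L:ℝ)) / cv) = (H:ℝ) * Real.exp (-(L:ℝ)) := by
        field_simp
      nlinarith [mul_le_mul_of_nonneg_left ht hcpos.le]
    have l5 : Real.log ((K:ℝ)/H) = Real.log K - Real.log H :=
      Real.log_div (ne_of_gt hKpos) (ne_of_gt hHpos)
    rw [hsymm]
    calc Real.log (n.choose cv) ≤ (cv:ℝ) * Real.log n - Real.log cv.factorial := l1
      _ ≤ (cv:ℝ) * (Real.log 2 + Real.log K) - ((cv:ℝ) * Real.log cv - cv) := by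
          nlinarith [mul_le_mul_of_nonneg_left l3 hcpos.le]
      _ = (cv:ℝ) * (1 + Real.log 2 + Real.log ((K:ℝ)/H)) + (cv:ℝ) * (Real.log H - Real.log cv) := by
          rw [l5]; ring
      _ ≤ (cv:ℝ) * (1 + Real.log 2 + Real.log ((K:ℝ)/H)) + ((cv:ℝ) * L + (H:ℝ) * Real.exp (-(L:ℝ))) := by
          linarith
      _ = _ := by ring


private lemma kostant_entry_le {W H : ℕ} {c : Fin W → Fin W → ℕ}
    (hc : IsKostant (fun _ => H) c) {i j : Fin W} (hij : i ≤ j) : c i j ≤ H := by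
  have h := hc.2 i
  calc c i j = (if i ≤ i ∧ i ≤ j then c i j else 0) := by simp [hij]
    _ ≤ ∑ j' : Fin W, (if i ≤ i ∧ i ≤ j' then c i j' else 0) :=
        Finset.single_le_sum (f := fun j' => if i ≤ i ∧ i ≤ j' then c i j' else 0)
          (fun _ _ => Nat.zero_le _) (Finset.mem_univ j)
    _ ≤ ∑ i' : Fin W, ∑ j' : Fin W, (if i' ≤ i ∧ i ≤ j' then c i' j' else 0) :=
        Finset.single_le_sum
          (f := fun i' => ∑ j' : Fin W, (if i' ≤ i ∧ i ≤ j' then c i' j' else 0))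
          (fun _ _ => Nat.zero_le _) (Finset.mem_univ i)
    _ = H := h

private lemma kostant_weight {W H : ℕ} {c : Fin W → Fin W → ℕ}
    (hc : IsKostant (fun _ => H) c) :
    ∑ i : Fin W, ∑ j : Fin W,
      (if i ≤ j then c i j * ((j:ℕ) - (i:ℕ) + 1) else 0) = W * H := by
  have inner : ∀ i j : Fin W, ∑ m : Fin W, (if i ≤ m ∧ m ≤ j then c i j else 0)
      = if i ≤ j then c i j * ((j:ℕ) - (i:ℕ) + 1) else 0 := by
    intro i j
    rw [← Finset.sum_filter, Finset.sum_const, smul_eq_mul]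
    have hfil : Finset.filter (fun m => i ≤ m ∧ m ≤ j) Finset.univ = Finset.Icc i j := by
      ext m; simp [Finset.mem_Icc]
    rw [hfil, Fin.card_Icc]
    by_cases hij : i ≤ j
    · rw [if_pos hij, mul_comm]
      congr 1
      have : (i:ℕ) ≤ (j:ℕ) := hij
      omega
    · rw [if_neg hij, hc.1 i j (lt_of_not_ge hij), mul_zero]
  have h1 : ∑ m : Fin W, ∑ i : Fin W, ∑ j : Fin W,
      (if i ≤ m ∧ m ≤ j then c i j else 0) = W * H := by
    rw [Finset.sum_congr rfl (fun m _ => hc.2 m)]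
    simp [Finset.sum_const, Finset.card_univ, Nat.mul_comm]
  rw [Finset.sum_comm] at h1
  rw [Finset.sum_congr rfl (fun (i : Fin W) _ => Finset.sum_comm
    (f := fun m j => if i ≤ m ∧ m ≤ j then c i j else 0))] at h1
  rw [Finset.sum_congr rfl (fun i _ => Finset.sum_congr rfl (fun j _ => inner i j))] at h1
  exact h1

private lemma sum_exp_le {W : ℕ} (i : Fin W) :
    ∑ j : Fin W, (if i ≤ j then Real.exp (-((((j:ℕ) - (i:ℕ) + 1 : ℕ)):ℝ)) else 0) ≤ 1 := by
  have hterm : ∀ j : Fin W,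
      Real.exp (-((((j:ℕ) - (i:ℕ) + 1 : ℕ)):ℝ)) ≤ ((1:ℝ)/2)^((j:ℕ) - (i:ℕ) + 1) := by
    intro j
    set L := (j:ℕ) - (i:ℕ) + 1 with hL
    rw [Real.exp_neg, div_pow, one_pow, one_div]
    apply inv_anti₀ (by positivity)
    calc (2:ℝ)^L ≤ (Real.exp 1)^L := by
          apply pow_le_pow_left₀ (by norm_num)
          have := Real.exp_one_gt_d9; linarith
      _ = Real.exp L := by rw [← Real.exp_nat_mul, mul_one]
  have step1 : ∑ j : Fin W, (if i ≤ j then Real.exp (-((((j:ℕ) - (i:ℕ) + 1 : ℕ)):ℝ)) else 0)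
      ≤ ∑ j : Fin W, (if i ≤ j then ((1:ℝ)/2)^((j:ℕ) - (i:ℕ) + 1) else 0) := by
    apply Finset.sum_le_sum
    intro j _
    by_cases h : i ≤ j
    · simpa [h] using hterm j
    · simp [h]
  refine step1.trans ?_
  rw [← Finset.sum_filter]
  have himg := Finset.sum_image (f := fun d : ℕ => ((1:ℝ)/2)^(d+1))
    (s := Finset.filter (fun j => i ≤ j) Finset.univ) (g := fun j : Fin W => (j:ℕ) - (i:ℕ))
    (by
      intro x hx y hy hxy
      simp only [Finset.coe_filter, Finset.mem_filter, Finset.mem_univ, true_and, Set.mem_setOf_eq] at hx hy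
      have hx' : (i:ℕ) ≤ (x:ℕ) := hx
      have hy' : (i:ℕ) ≤ (y:ℕ) := hy
      have hxy' : (x:ℕ) - (i:ℕ) = (y:ℕ) - (i:ℕ) := hxy
      apply Fin.ext
      omega)
  calc ∑ j ∈ Finset.filter (fun j => i ≤ j) Finset.univ, ((1:ℝ)/2)^((j:ℕ) - (i:ℕ) + 1)
      = ∑ d ∈ (Finset.filter (fun j => i ≤ j) Finset.univ).image
          (fun j : Fin W => (j:ℕ) - (i:ℕ)), ((1:ℝ)/2)^(d+1) := himg.symm
    _ ≤ ∑ d ∈ Finset.range W, ((1:ℝ)/2)^(d+1) := by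
        apply Finset.sum_le_sum_of_subset_of_nonneg
        · intro d hd
          simp only [Finset.mem_image, Finset.mem_filter, Finset.mem_univ, true_and] at hd
          obtain ⟨j, _, rfl⟩ := hd
          simp only [Finset.mem_range]
          omega
        · intro _ _ _; positivity
    _ = 1 - (1/2)^W := sum_half_pow W
    _ ≤ 1 := by
        have : (0:ℝ) ≤ (1/2)^W := by positivity
        linarith

private def diagPic (W H : ℕ) : Fin W → Fin W → ℕ := fun i j => if i = j then H else 0

private lemma diag_isKostant (W H : ℕ) : IsKostant (fun _ : Fin W => H) (diagPic W H) := by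
  constructor
  · intro i j hji
    unfold diagPic
    rw [if_neg]
    exact fun h => absurd h.symm (ne_of_lt hji)
  · intro m
    have hs : ∀ i j : Fin W, (if i ≤ m ∧ m ≤ j then diagPic W H i j else 0)
        = if j = i then (if i = m then H else 0) else 0 := by
      intro i j
      unfold diagPic
      by_cases hji : j = i
      · subst hji
        by_cases him : j = m
        · subst him; simp
        · rw [if_pos rfl, if_pos rfl, if_neg him]
          split_ifs with h1
          · exact absurd (le_antisymm h1.1 h1.2) him
          · rfl
      · have hij : i ≠ j := fun h => hji h.symm
        simp [hji, hij]
    have hinner : ∀ i : Fin W, ∑ j : Fin W, (if i ≤ m ∧ m ≤ j then diagPic W H i j else 0)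
        = if i = m then H else 0 := by
      intro i
      rw [Finset.sum_congr rfl (fun j _ => hs i j), Finset.sum_ite_eq' Finset.univ i
        (fun _ => if i = m then H else 0)]
      simp
    rw [Finset.sum_congr rfl (fun i _ => hinner i), Finset.sum_ite_eq' Finset.univ m
      (fun _ => H)]
    simp

private lemma diag_value (W H K : ℕ) :
    (∏ i : Fin W, ∏ j : Fin W,
        (if i ≤ j then Nat.choose (diagPic W H i j + K - 1) (K-1) else 1))
      = (Nat.choose (H + K - 1) (K-1))^W := by
  have hs : ∀ i j : Fin W, (if i ≤ j then Nat.choose (diagPic W H i j + K - 1) (K-1) else 1)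
      = if j = i then Nat.choose (H + K - 1) (K-1) else 1 := by
    intro i j
    unfold diagPic
    by_cases hji : j = i
    · subst hji; simp
    · have hij : i ≠ j := fun h => hji h.symm
      have h0 : (0:ℕ) + K - 1 = K - 1 := by omega
      simp [hji, hij, h0, Nat.choose_self]
  have hinner : ∀ i : Fin W, ∏ j : Fin W,
      (if i ≤ j then Nat.choose (diagPic W H i j + K - 1) (K-1) else 1)
      = Nat.choose (H + K - 1) (K-1) := by
    intro i
    rw [Finset.prod_congr rfl (fun j _ => hs i j), Finset.prod_ite_eq' Finset.univ i
      (fun _ => Nat.choose (H + K - 1) (K-1))]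
    simp
  rw [Finset.prod_congr rfl (fun i _ => hinner i), Finset.prod_const, Finset.card_univ,
    Fintype.card_fin]

private lemma kostant_finite (W H : ℕ) :
    {c : Fin W → Fin W → ℕ | IsKostant (fun _ => H) c}.Finite := by
  apply Set.Finite.subset (Set.Finite.pi (fun _ : Fin W =>
    Set.Finite.pi (fun _ : Fin W => Set.finite_Iic H)))
  intro c hc
  simp only [Set.mem_pi, Set.mem_univ, forall_true_left, Set.mem_Iic, true_implies]
  intro i j
  rcases le_or_gt i j with hle | hlt
  · exact kostant_entry_le hc hle
  · rw [hc.1 i j hlt]; exact Nat.zero_le _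

private lemma picture_bound {W H K : ℕ} (hH : 0 < H) (hHK : H ≤ K)
    {c : Fin W → Fin W → ℕ} (hc : IsKostant (fun _ => H) c) :
    Real.log ((∏ i : Fin W, ∏ j : Fin W,
        (if i ≤ j then Nat.choose (c i j + K - 1) (K-1) else 1) : ℕ))
      ≤ (H:ℝ) * W * (3 + Real.log 2 + Real.log ((K:ℝ)/H)) := by
  have hHpos : (0:ℝ) < H := by exact_mod_cast hH
  set A := 1 + Real.log 2 + Real.log ((K:ℝ)/H) with hA
  have hlogKH : 0 ≤ Real.log ((K:ℝ)/H) := by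
    apply Real.log_nonneg
    rw [le_div_iff₀ hHpos, one_mul]
    exact_mod_cast hHK
  have hA0 : 0 ≤ A := by
    have := Real.log_nonneg (by norm_num : (1:ℝ) ≤ 2)
    rw [hA]; linarith
  have hcast : ((∏ i : Fin W, ∏ j : Fin W,
      (if i ≤ j then Nat.choose (c i j + K - 1) (K-1) else 1) : ℕ) : ℝ)
      = ∏ i : Fin W, ∏ j : Fin W,
        (if i ≤ j then ((Nat.choose (c i j + K - 1) (K-1)) : ℝ) else 1) := by
    push_cast
    rfl
  have hfactpos : ∀ i j : Fin W,
      (0:ℝ) < (if i ≤ j then ((Nat.choose (c i j + K - 1) (K-1)):ℝ) else 1) := by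
    intro i j
    split
    · have : 0 < Nat.choose (c i j + K - 1) (K-1) := Nat.choose_pos (by omega)
      exact_mod_cast this
    · norm_num
  rw [hcast, Real.log_prod
    (fun i _ => Finset.prod_ne_zero_iff.mpr (fun j _ => ne_of_gt (hfactpos i j))),
    Finset.sum_congr rfl (fun i _ => Real.log_prod
      (fun j _ => ne_of_gt (hfactpos i j)))]
  have hterm : ∀ i j : Fin W,
      Real.log (if i ≤ j then ((Nat.choose (c i j + K - 1) (K-1)):ℝ) else 1)
      ≤ (if i ≤ j then (c i j : ℝ) * A else 0)
        + (if i ≤ j then (c i j : ℝ) * ((((j:ℕ)-(i:ℕ)+1:ℕ)):ℝ) else 0)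
        + (if i ≤ j then (H:ℝ) * Real.exp (-((((j:ℕ)-(i:ℕ)+1:ℕ)):ℝ)) else 0) := by
    intro i j
    by_cases hij : i ≤ j
    · simp only [if_pos hij]
      have := log_choose_le H K (c i j) ((j:ℕ)-(i:ℕ)+1) hH hHK
        (kostant_entry_le hc hij) (by omega)
      calc Real.log ((Nat.choose (c i j + K - 1) (K-1)):ℝ)
          ≤ (c i j:ℝ) * (1 + Real.log 2 + Real.log ((K:ℝ)/H))
            + (c i j:ℝ) * (((j:ℕ)-(i:ℕ)+1:ℕ):ℝ)
            + (H:ℝ) * Real.exp (-((((j:ℕ)-(i:ℕ)+1:ℕ)):ℝ)) := this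
        _ = _ := by rw [hA]
    · simp only [if_neg hij, Real.log_one]
      norm_num
  refine (Finset.sum_le_sum (fun i _ => Finset.sum_le_sum (fun j _ => hterm i j))).trans ?_
  have hsum_split : ∑ i : Fin W, ∑ j : Fin W,
      ((if i ≤ j then (c i j : ℝ) * A else 0)
        + (if i ≤ j then (c i j : ℝ) * ((((j:ℕ)-(i:ℕ)+1:ℕ)):ℝ) else 0)
        + (if i ≤ j then (H:ℝ) * Real.exp (-((((j:ℕ)-(i:ℕ)+1:ℕ)):ℝ)) else 0))
      = (∑ i : Fin W, ∑ j : Fin W, (if i ≤ j then (c i j : ℝ) * A else 0))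
        + (∑ i : Fin W, ∑ j : Fin W,
            (if i ≤ j then (c i j : ℝ) * ((((j:ℕ)-(i:ℕ)+1:ℕ)):ℝ) else 0))
        + (∑ i : Fin W, ∑ j : Fin W,
            (if i ≤ j then (H:ℝ) * Real.exp (-((((j:ℕ)-(i:ℕ)+1:ℕ)):ℝ)) else 0)) := by
    rw [← Finset.sum_add_distrib, ← Finset.sum_add_distrib]
    apply Finset.sum_congr rfl
    intro i _
    rw [← Finset.sum_add_distrib, ← Finset.sum_add_distrib]
  rw [hsum_split]
  -- second sum equals W*H
  have hS2 : ∑ i : Fin W, ∑ j : Fin W,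
      (if i ≤ j then (c i j : ℝ) * ((((j:ℕ)-(i:ℕ)+1:ℕ)):ℝ) else 0) = (W:ℝ) * H := by
    have hnat := kostant_weight hc
    have hcongr : ∀ i j : Fin W,
        (if i ≤ j then (c i j : ℝ) * ((((j:ℕ)-(i:ℕ)+1:ℕ)):ℝ) else 0)
        = (((if i ≤ j then c i j * ((j:ℕ) - (i:ℕ) + 1) else 0 : ℕ)) : ℝ) := by
      intro i j
      split_ifs
      · push_cast; ring
      · simp
    calc ∑ i : Fin W, ∑ j : Fin W,
          (if i ≤ j then (c i j : ℝ) * ((((j:ℕ)-(i:ℕ)+1:ℕ)):ℝ) else 0)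
        = ((∑ i : Fin W, ∑ j : Fin W,
            (if i ≤ j then c i j * ((j:ℕ) - (i:ℕ) + 1) else 0) : ℕ) : ℝ) := by
          rw [Nat.cast_sum]
          exact Finset.sum_congr rfl (fun i _ => by
            rw [Nat.cast_sum]
            exact Finset.sum_congr rfl (fun j _ => hcongr i j))
      _ = ((W * H : ℕ) : ℝ) := by rw [hnat]
      _ = (W:ℝ) * H := by push_cast; ring
  -- first sum ≤ (W*H) * A
  have hS1 : ∑ i : Fin W, ∑ j : Fin W, (if i ≤ j then (c i j : ℝ) * A else 0)
      ≤ ((W:ℝ) * H) * A := by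
    rw [← hS2]
    simp only [Finset.sum_mul]
    apply Finset.sum_le_sum
    intro i _
    apply Finset.sum_le_sum
    intro j _
    split_ifs with hij
    · have hL : (1:ℝ) ≤ (((j:ℕ)-(i:ℕ)+1:ℕ):ℝ) := by
        have : (1:ℕ) ≤ (j:ℕ)-(i:ℕ)+1 := by omega
        exact_mod_cast this
      have hcnn : (0:ℝ) ≤ (c i j : ℝ) := by positivity
      have h1 : (c i j : ℝ) * 1 ≤ (c i j : ℝ) * ((((j:ℕ)-(i:ℕ)+1:ℕ)):ℝ) :=
        mul_le_mul_of_nonneg_left hL hcnn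
      have h2 := mul_le_mul_of_nonneg_right h1 hA0
      rw [mul_one] at h2
      linarith
    · simp
  -- third sum ≤ W * H
  have hS3 : ∑ i : Fin W, ∑ j : Fin W,
      (if i ≤ j then (H:ℝ) * Real.exp (-((((j:ℕ)-(i:ℕ)+1:ℕ)):ℝ)) else 0) ≤ (W:ℝ) * H := by
    have hrow : ∀ i : Fin W, ∑ j : Fin W,
        (if i ≤ j then (H:ℝ) * Real.exp (-((((j:ℕ)-(i:ℕ)+1:ℕ)):ℝ)) else 0) ≤ (H:ℝ) := by
      intro i
      have hfac : ∀ j : Fin W,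
          (if i ≤ j then (H:ℝ) * Real.exp (-((((j:ℕ)-(i:ℕ)+1:ℕ)):ℝ)) else 0)
          = (H:ℝ) * (if i ≤ j then Real.exp (-((((j:ℕ)-(i:ℕ)+1:ℕ)):ℝ)) else 0) := by
        intro j
        split_ifs
        · rfl
        · ring
      rw [Finset.sum_congr rfl (fun j _ => hfac j), ← Finset.mul_sum]
      calc (H:ℝ) * ∑ j : Fin W,
            (if i ≤ j then Real.exp (-((((j:ℕ)-(i:ℕ)+1:ℕ)):ℝ)) else 0)
          ≤ (H:ℝ) * 1 := mul_le_mul_of_nonneg_left (sum_exp_le i) hHpos.le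
        _ = (H:ℝ) := mul_one _
    calc ∑ i : Fin W, ∑ j : Fin W,
          (if i ≤ j then (H:ℝ) * Real.exp (-((((j:ℕ)-(i:ℕ)+1:ℕ)):ℝ)) else 0)
        ≤ ∑ _i : Fin W, (H:ℝ) := Finset.sum_le_sum (fun i _ => hrow i)
      _ = (W:ℝ) * H := by
          rw [Finset.sum_const, Finset.card_univ, Fintype.card_fin, nsmul_eq_mul]
  calc (∑ i : Fin W, ∑ j : Fin W, (if i ≤ j then (c i j : ℝ) * A else 0))
        + (∑ i : Fin W, ∑ j : Fin W,
            (if i ≤ j then (c i j : ℝ) * ((((j:ℕ)-(i:ℕ)+1:ℕ)):ℝ) else 0))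
        + (∑ i : Fin W, ∑ j : Fin W,
            (if i ≤ j then (H:ℝ) * Real.exp (-((((j:ℕ)-(i:ℕ)+1:ℕ)):ℝ)) else 0))
      ≤ ((W:ℝ) * H) * A + (W:ℝ) * H + (W:ℝ) * H := by
        have := hS2.le
        linarith [hS1, hS3, hS2.le]
    _ = (H:ℝ) * W * (3 + Real.log 2 + Real.log ((K:ℝ)/H)) := by rw [hA]; ring

private lemma pow_le_pow_mul_choose {H K : ℕ} (hH : 0 < H) (hHK : H ≤ K) :
    K^H ≤ H^H * Nat.choose (H + K - 1) H := by
  have key : K^H * H.factorial ≤ H^H * (H + K - 1).descFactorial H := by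
    rw [Nat.descFactorial_eq_prod_range, ← Finset.prod_range_add_one_eq_factorial]
    rw [show K^H = ∏ _x ∈ Finset.range H, K by rw [Finset.prod_const, Finset.card_range],
      show H^H = ∏ _x ∈ Finset.range H, H by rw [Finset.prod_const, Finset.card_range],
      ← Finset.prod_mul_distrib, ← Finset.prod_mul_distrib]
    apply Finset.prod_le_prod'
    intro t ht
    have h1 : t + 1 ≤ H := Finset.mem_range.mp ht
    have h2 : K ≤ H + K - 1 - t := by omega
    calc K * (t+1) = (t+1) * K := Nat.mul_comm _ _
      _ ≤ H * (H + K - 1 - t) := Nat.mul_le_mul h1 h2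
  rw [Nat.descFactorial_eq_factorial_mul_choose] at key
  have key2 : K^H * H.factorial ≤ (H^H * Nat.choose (H + K - 1) H) * H.factorial := by
    calc K^H * H.factorial ≤ H^H * (H.factorial * Nat.choose (H + K - 1) H) := key
      _ = (H^H * Nat.choose (H + K - 1) H) * H.factorial := by ring
  exact Nat.le_of_mul_le_mul_right key2 H.factorial_pos

private lemma lower_bound {H W K : ℕ} (hH : 0 < H) (hHK : H ≤ K) :
    (H:ℝ) * W * Real.log ((K:ℝ)/H) ≤ Lcol K H W := by
  have hK : 0 < K := lt_of_lt_of_le hH hHK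
  have hHpos : (0:ℝ) < H := by exact_mod_cast hH
  have hKpos : (0:ℝ) < K := by exact_mod_cast hK
  set f : (Fin W → Fin W → ℕ) → ℕ := fun c =>
    ∏ i : Fin W, ∏ j : Fin W,
      (if i ≤ j then Nat.choose (c i j + K - 1) (K - 1) else 1) with hf
  have hmem : (Nat.choose (H + K - 1) (K-1))^W ∈
      f '' {c : Fin W → Fin W → ℕ | IsKostant (fun _ => H) c} :=
    ⟨diagPic W H, diag_isKostant W H, diag_value W H K⟩
  have hbdd : BddAbove (f '' {c : Fin W → Fin W → ℕ | IsKostant (fun _ => H) c}) :=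
    ((kostant_finite W H).image f).bddAbove
  have hT : (Nat.choose (H + K - 1) (K-1))^W ≤ Tcol K (fun _ : Fin W => H) :=
    le_csSup hbdd hmem
  have hchoosepos : 0 < Nat.choose (H + K - 1) (K-1) := Nat.choose_pos (by omega)
  have hposR : (0:ℝ) < ((Nat.choose (H + K - 1) (K-1))^W : ℕ) := by
    have : 0 < (Nat.choose (H + K - 1) (K-1))^W := pow_pos hchoosepos W
    exact_mod_cast this
  have hlogT : Real.log (((Nat.choose (H + K - 1) (K-1))^W : ℕ)) ≤ Lcol K H W := by
    unfold Lcol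
    apply Real.log_le_log hposR
    exact_mod_cast hT
  refine le_trans ?_ hlogT
  have hsymm : Nat.choose (H + K - 1) (K-1) = Nat.choose (H + K - 1) H := by
    have h2 : (H + K - 1) - H = K - 1 := by omega
    rw [← h2, Nat.choose_symm (by omega)]
  have hkey : (K:ℝ)^H ≤ (H:ℝ)^H * (Nat.choose (H + K - 1) H : ℝ) := by
    exact_mod_cast pow_le_pow_mul_choose hH hHK
  have hchooseposR : (0:ℝ) < (Nat.choose (H + K - 1) H : ℝ) := by
    rw [← hsymm]; exact_mod_cast hchoosepos
  have hlogchoose : (H:ℝ) * Real.log ((K:ℝ)/H)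
      ≤ Real.log (Nat.choose (H + K - 1) H : ℝ) := by
    have hlog := Real.log_le_log (by positivity) hkey
    rw [Real.log_pow, Real.log_mul (by positivity) (ne_of_gt hchooseposR),
      Real.log_pow] at hlog
    rw [Real.log_div (ne_of_gt hKpos) (ne_of_gt hHpos), mul_sub]
    linarith
  push_cast [hsymm]
  rw [Real.log_pow]
  calc (H:ℝ) * W * Real.log ((K:ℝ)/H) = (W:ℝ) * ((H:ℝ) * Real.log ((K:ℝ)/H)) := by ring
    _ ≤ (W:ℝ) * Real.log (Nat.choose (H + K - 1) H : ℝ) :=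
        mul_le_mul_of_nonneg_left hlogchoose (by positivity)

private lemma upper_bound {H W K : ℕ} (hH : 0 < H) (hK8 : 8 * H ≤ K) :
    Lcol K H W ≤ 4 * ((H:ℝ) * W * Real.log ((K:ℝ)/H)) := by
  have hHK : H ≤ K := by omega
  have hHpos : (0:ℝ) < H := by exact_mod_cast hH
  have hKpos : (0:ℝ) < K := by exact_mod_cast (lt_of_lt_of_le hH hHK)
  set f : (Fin W → Fin W → ℕ) → ℕ := fun c =>
    ∏ i : Fin W, ∏ j : Fin W,
      (if i ≤ j then Nat.choose (c i j + K - 1) (K - 1) else 1) with hf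
  have hne : (f '' {c : Fin W → Fin W → ℕ | IsKostant (fun _ => H) c}).Nonempty :=
    ⟨f (diagPic W H), ⟨diagPic W H, diag_isKostant W H, rfl⟩⟩
  have hfin : (f '' {c : Fin W → Fin W → ℕ | IsKostant (fun _ => H) c}).Finite :=
    (kostant_finite W H).image f
  have hmem := hne.csSup_mem hfin
  obtain ⟨c, hc, hval⟩ := hmem
  have hbound : Lcol K H W ≤ (H:ℝ) * W * (3 + Real.log 2 + Real.log ((K:ℝ)/H)) := by
    unfold Lcol Tcol
    rw [← hval]
    exact picture_bound hH hHK hc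
  refine hbound.trans ?_
  have hx : 3 * Real.log 2 ≤ Real.log ((K:ℝ)/H) := by
    have h8 : (8:ℝ) ≤ (K:ℝ)/H := by
      rw [le_div_iff₀ hHpos]
      exact_mod_cast hK8
    calc 3 * Real.log 2 = Real.log (2^3) := by rw [Real.log_pow]; push_cast; ring
      _ ≤ Real.log ((K:ℝ)/H) := Real.log_le_log (by norm_num) (by norm_num at h8 ⊢; linarith)
  have harith : 3 + Real.log 2 + Real.log ((K:ℝ)/H) ≤ 4 * Real.log ((K:ℝ)/H) := by
    have hlt := Real.log_two_lt_d9
    have hgt := Real.log_two_gt_d9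
    linarith
  calc (H:ℝ) * W * (3 + Real.log 2 + Real.log ((K:ℝ)/H))
      ≤ (H:ℝ) * W * (4 * Real.log ((K:ℝ)/H)) :=
        mul_le_mul_of_nonneg_left harith (by positivity)
    _ = 4 * ((H:ℝ) * W * Real.log ((K:ℝ)/H)) := by ring

/-- If `k ≻ 1` and `h ≺ k`, then `L^k[h,w] ≍ h·w·ln(k/h)`. -/
theorem Lcol_asymp_small (h w k : ℕ → ℕ)
    (hh : ∀ n, 0 < h n) (hw : ∀ n, 0 < w n) (hk : ∀ n, 0 < k n)
    (hk1 : Tendsto (fun n => (1 : ℝ) / k n) atTop (nhds 0))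
    (hhk : Tendsto (fun n => (h n : ℝ) / k n) atTop (nhds 0)) :
    ∃ a b : ℝ, 0 < a ∧ a ≤ b ∧ ∀ᶠ n : ℕ in atTop,
      a * ((h n : ℝ) * (w n : ℝ) * Real.log ((k n : ℝ) / (h n : ℝ))) ≤
        Lcol (k n) (h n) (w n) ∧
      Lcol (k n) (h n) (w n) ≤
        b * ((h n : ℝ) * (w n : ℝ) * Real.log ((k n : ℝ) / (h n : ℝ))) := by
  refine ⟨1, 4, one_pos, by norm_num, ?_⟩
  have hev : ∀ᶠ n in atTop, (h n : ℝ)/(k n) < 1/8 :=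
    hhk.eventually_lt_const (by norm_num)
  filter_upwards [hev] with n hn
  have hkpos : (0:ℝ) < k n := by exact_mod_cast hk n
  have h8 : 8 * h n ≤ k n := by
    have h1 : (h n : ℝ) < 1/8 * k n := (div_lt_iff₀ hkpos).mp hn
    have h2 : (8 * h n : ℝ) < (k n : ℝ) := by linarith
    have h3 : 8 * h n < k n := by exact_mod_cast h2
    omega
  constructor
  · rw [one_mul]
    exact lower_bound (hh n) (by omega)
  · exact upper_bound (hh n) h8
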